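/- arXiv:2404.02727 — 5 statements merged into one kernel-verified Lean document; each statement's English description precedes it below -/
import Mathlib

section
/- Let D = [P; Y] ∈ ℝ^{(r+s)×ℓ} have full row rank, with P ∈ ℝ^{r×ℓ}, Y ∈ ℝ^{s×ℓ}, and let Π := Pᵀ(PPᵀ)⁻¹P. Then for every p ∈ ℝʳ and y ∈ ℝˢ, min { ‖(I − Π)a‖₂² : Pa = p, Ya = y } = (y − YP⁺p)ᵀ (Y(I−Π)Yᵀ)⁻¹ (y − YP⁺p), where P⁺ := Pᵀ(PPᵀ)⁻¹ is the Moore–Penrose pseudoinverse of P. -/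
open Matrix

private lemma dp_shift {m n : ℕ} (A : Matrix (Fin m) (Fin n) ℝ) (x : Fin n → ℝ)
    (y : Fin m → ℝ) : (A *ᵥ x) ⬝ᵥ y = x ⬝ᵥ (Aᵀ *ᵥ y) := by
  rw [dotProduct_mulVec, vecMul_transpose]

private lemma dp_self_nonneg {n : ℕ} (x : Fin n → ℝ) : 0 ≤ x ⬝ᵥ x :=
  Finset.sum_nonneg fun i _ => mul_self_nonneg _

/-- Closed form of the projection-regularizer elimination: for full row rank
`D = [P; Y]` and `Π = Pᵀ(PPᵀ)⁻¹P`,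
`min { ‖(I−Π)a‖² : Pa = p, Ya = y } = (y − YP⁺p)ᵀ(Y(I−Π)Yᵀ)⁻¹(y − YP⁺p)`,
with `P⁺ = Pᵀ(PPᵀ)⁻¹`. -/
theorem stmt_9 (r s ℓ : ℕ) (P : Matrix (Fin r) (Fin ℓ) ℝ)
    (Y : Matrix (Fin s) (Fin ℓ) ℝ)
    (hrank : (Matrix.fromRows P Y).rank = r + s) :
    let Pi : Matrix (Fin ℓ) (Fin ℓ) ℝ := Pᵀ * (P * Pᵀ)⁻¹ * P
    let Pplus : Matrix (Fin ℓ) (Fin r) ℝ := Pᵀ * (P * Pᵀ)⁻¹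
    ∀ (p : Fin r → ℝ) (y : Fin s → ℝ),
      IsLeast {v : ℝ | ∃ a : Fin ℓ → ℝ, P *ᵥ a = p ∧ Y *ᵥ a = y ∧
          v = ((1 - Pi) *ᵥ a) ⬝ᵥ ((1 - Pi) *ᵥ a)}
        ((y - Y *ᵥ (Pplus *ᵥ p)) ⬝ᵥ
          ((Y * (1 - Pi) * Yᵀ)⁻¹ *ᵥ (y - Y *ᵥ (Pplus *ᵥ p)))) := by
  intro Pi Pplus p y
  -- injectivity of mulVec of the transpose of the data matrix
  have hinjD : Function.Injective ((Matrix.fromRows P Y)ᵀ).mulVec := by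
    have h1 : ((Matrix.fromRows P Y)ᵀ).rank = r + s := by
      rw [Matrix.rank_transpose]; exact hrank
    have h2 := LinearMap.finrank_range_add_finrank_ker
      ((Matrix.fromRows P Y)ᵀ).mulVecLin
    rw [Matrix.rank] at h1
    rw [h1] at h2
    have h3 : Module.finrank ℝ ((Fin r ⊕ Fin s) → ℝ) = r + s := by
      simp [Module.finrank_pi]
    rw [h3] at h2
    have h4 : Module.finrank ℝ
        (LinearMap.ker ((Matrix.fromRows P Y)ᵀ).mulVecLin) = 0 := by omega
    have h5 : LinearMap.ker ((Matrix.fromRows P Y)ᵀ).mulVecLin = ⊥ :=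
      Submodule.finrank_eq_zero.mp h4
    have h6 := LinearMap.ker_eq_bot.mp h5
    intro a b hab
    exact h6 (by simpa only [Matrix.mulVecLin_apply] using hab)
  have hinj0 : ∀ (u : Fin r → ℝ) (v : Fin s → ℝ),
      Pᵀ *ᵥ u + Yᵀ *ᵥ v = 0 → u = 0 ∧ v = 0 := by
    intro u v h
    have h0 : (Matrix.fromRows P Y)ᵀ *ᵥ (Sum.elim u v)
        = (Matrix.fromRows P Y)ᵀ *ᵥ 0 := by
      rw [Matrix.transpose_fromRows, Matrix.fromCols_mulVec_sumElim,
        Matrix.mulVec_zero, h]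
    have h1 := hinjD h0
    constructor
    · funext i; exact congrFun h1 (Sum.inl i)
    · funext i; exact congrFun h1 (Sum.inr i)
  -- invertibility of P * Pᵀ
  have hPPt : IsUnit (P * Pᵀ).det := by
    rw [← Matrix.isUnit_iff_isUnit_det, ← Matrix.mulVec_injective_iff_isUnit]
    intro a b hab
    have h1 : (P * Pᵀ) *ᵥ (a - b) = 0 := by
      rw [Matrix.mulVec_sub, hab, sub_self]
    have h2 : (Pᵀ *ᵥ (a - b)) ⬝ᵥ (Pᵀ *ᵥ (a - b)) = 0 := by
      rw [dp_shift, transpose_transpose, Matrix.mulVec_mulVec, h1,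
        dotProduct_zero]
    have h3 : Pᵀ *ᵥ (a - b) = 0 := dotProduct_self_eq_zero.mp h2
    have h4 := (hinj0 (a - b) 0 (by simp [h3])).1
    exact sub_eq_zero.mp h4
  have hQ1 : (P * Pᵀ) * (P * Pᵀ)⁻¹ = 1 := Matrix.mul_nonsing_inv _ hPPt
  have hQ2 : (P * Pᵀ)⁻¹ * (P * Pᵀ) = 1 := Matrix.nonsing_inv_mul _ hPPt
  have hQt : ((P * Pᵀ)⁻¹)ᵀ = (P * Pᵀ)⁻¹ := by
    rw [Matrix.transpose_nonsing_inv, Matrix.transpose_mul,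
      Matrix.transpose_transpose]
  -- basic projection identities
  have hPiPt : Pi * Pᵀ = Pᵀ := by
    show Pᵀ * (P * Pᵀ)⁻¹ * P * Pᵀ = Pᵀ
    rw [Matrix.mul_assoc (Pᵀ * (P * Pᵀ)⁻¹) P Pᵀ,
      Matrix.mul_assoc Pᵀ (P * Pᵀ)⁻¹ (P * Pᵀ), hQ2, Matrix.mul_one]
  have hPPi : P * Pi = P := by
    show P * (Pᵀ * (P * Pᵀ)⁻¹ * P) = P
    rw [← Matrix.mul_assoc P (Pᵀ * (P * Pᵀ)⁻¹) P,
      ← Matrix.mul_assoc P Pᵀ (P * Pᵀ)⁻¹, hQ1, Matrix.one_mul]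
  have hPiPi : Pi * Pi = Pi := by
    show Pi * (Pᵀ * (P * Pᵀ)⁻¹ * P) = Pi
    rw [← Matrix.mul_assoc Pi (Pᵀ * (P * Pᵀ)⁻¹) P,
      ← Matrix.mul_assoc Pi Pᵀ (P * Pᵀ)⁻¹, hPiPt]
  have hPit : Piᵀ = Pi := by
    show (Pᵀ * (P * Pᵀ)⁻¹ * P)ᵀ = Pᵀ * (P * Pᵀ)⁻¹ * P
    rw [Matrix.transpose_mul, Matrix.transpose_mul, hQt,
      Matrix.transpose_transpose, Matrix.mul_assoc]
  set E : Matrix (Fin ℓ) (Fin ℓ) ℝ := 1 - Pi with hEdef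
  have hEt : Eᵀ = E := by
    rw [hEdef, Matrix.transpose_sub, Matrix.transpose_one, hPit]
  have hEE : E * E = E := by
    rw [hEdef, Matrix.sub_mul, Matrix.mul_sub, Matrix.mul_sub, hPiPi,
      Matrix.one_mul, Matrix.one_mul, Matrix.mul_one, sub_self, sub_zero]
  have hPE : P * E = 0 := by
    rw [hEdef, Matrix.mul_sub, hPPi, Matrix.mul_one, sub_self]
  have hEPt : E * Pᵀ = 0 := by
    rw [hEdef, Matrix.sub_mul, hPiPt, Matrix.one_mul, sub_self]
  have hEPp : E * Pplus = 0 := by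
    show E * (Pᵀ * (P * Pᵀ)⁻¹) = 0
    rw [← Matrix.mul_assoc, hEPt, Matrix.zero_mul]
  have hPPp : P * Pplus = 1 := by
    show P * (Pᵀ * (P * Pᵀ)⁻¹) = 1
    rw [← Matrix.mul_assoc, hQ1]
  set M : Matrix (Fin s) (Fin s) ℝ := Y * E * Yᵀ with hMdef
  have hMt : Mᵀ = M := by
    rw [hMdef, Matrix.transpose_mul, Matrix.transpose_mul, hEt,
      Matrix.transpose_transpose, Matrix.mul_assoc]
  -- key quadratic-form identity
  have hkey : ∀ z : Fin s → ℝ,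
      (E *ᵥ (Yᵀ *ᵥ z)) ⬝ᵥ (E *ᵥ (Yᵀ *ᵥ z)) = z ⬝ᵥ (M *ᵥ z) := by
    intro z
    rw [dp_shift, hEt]
    simp only [Matrix.mulVec_mulVec]
    rw [← Matrix.mul_assoc E E Yᵀ, hEE, ← Matrix.mulVec_mulVec,
      dp_shift Yᵀ z, transpose_transpose]
    simp only [Matrix.mulVec_mulVec]
    rw [← Matrix.mul_assoc, ← hMdef]
  -- invertibility of M
  have hMunit : IsUnit M.det := by
    rw [← Matrix.isUnit_iff_isUnit_det, ← Matrix.mulVec_injective_iff_isUnit]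
    intro a b hab
    have h1 : M *ᵥ (a - b) = 0 := by rw [Matrix.mulVec_sub, hab, sub_self]
    have h2 : (E *ᵥ (Yᵀ *ᵥ (a - b))) ⬝ᵥ (E *ᵥ (Yᵀ *ᵥ (a - b))) = 0 := by
      rw [hkey, h1, dotProduct_zero]
    have h3 : E *ᵥ (Yᵀ *ᵥ (a - b)) = 0 := dotProduct_self_eq_zero.mp h2
    have h4 : Yᵀ *ᵥ (a - b) = Pi *ᵥ (Yᵀ *ᵥ (a - b)) := by
      rw [hEdef, Matrix.sub_mulVec, Matrix.one_mulVec] at h3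
      exact sub_eq_zero.mp h3
    have h5 : Pᵀ *ᵥ (-((P * Pᵀ)⁻¹ *ᵥ (P *ᵥ (Yᵀ *ᵥ (a - b)))))
        + Yᵀ *ᵥ (a - b) = 0 := by
      rw [Matrix.mulVec_neg]
      nth_rewrite 2 [h4]
      show -(Pᵀ *ᵥ ((P * Pᵀ)⁻¹ *ᵥ (P *ᵥ (Yᵀ *ᵥ (a - b)))))
        + (Pᵀ * (P * Pᵀ)⁻¹ * P) *ᵥ (Yᵀ *ᵥ (a - b)) = 0
      rw [Matrix.mulVec_mulVec, Matrix.mulVec_mulVec, Matrix.mul_assoc]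
      exact neg_add_cancel _
    have h6 := (hinj0 _ _ h5).2
    exact sub_eq_zero.mp h6
  have hM1 : M * M⁻¹ = 1 := Matrix.mul_nonsing_inv _ hMunit
  -- notation
  set e : Fin s → ℝ := y - Y *ᵥ (Pplus *ᵥ p) with hedef
  set z : Fin s → ℝ := M⁻¹ *ᵥ e with hzdef
  set wstar : Fin ℓ → ℝ := E *ᵥ (Yᵀ *ᵥ z) with hwdef
  have hYw : Y *ᵥ wstar = e := by
    rw [hwdef, Matrix.mulVec_mulVec, Matrix.mulVec_mulVec, ← hMdef, hzdef,
      Matrix.mulVec_mulVec, hM1, Matrix.one_mulVec]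
  have hEw : E *ᵥ wstar = wstar := by
    rw [hwdef, Matrix.mulVec_mulVec, Matrix.mulVec_mulVec, hEE,
      ← Matrix.mulVec_mulVec]
  have hval : e ⬝ᵥ z = wstar ⬝ᵥ wstar := by
    rw [hwdef, hkey z, hzdef, Matrix.mulVec_mulVec, hM1, Matrix.one_mulVec,
      dotProduct_comm]
  constructor
  · -- membership: the minimizer
    refine ⟨Pplus *ᵥ p + wstar, ?_, ?_, ?_⟩
    · rw [Matrix.mulVec_add, Matrix.mulVec_mulVec, hPPp, Matrix.one_mulVec,
        hwdef, Matrix.mulVec_mulVec, hPE, Matrix.zero_mulVec, add_zero]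
    · rw [Matrix.mulVec_add, hYw, hedef]
      abel
    · have hEa : E *ᵥ (Pplus *ᵥ p + wstar) = wstar := by
        rw [Matrix.mulVec_add, Matrix.mulVec_mulVec, hEPp, Matrix.zero_mulVec,
          zero_add, hEw]
      rw [hEa, hval]
  · -- lower bound
    rintro v ⟨a, hPa, hYa, rfl⟩
    set w : Fin ℓ → ℝ := E *ᵥ a with hw
    have hEw2 : E *ᵥ w = w := by rw [hw, Matrix.mulVec_mulVec, hEE]
    have hYwa : Y *ᵥ w = e := by
      rw [hw, Matrix.mulVec_mulVec, hEdef, Matrix.mul_sub, Matrix.mul_one,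
        Matrix.sub_mulVec, hYa]
      have hPiPp : (Pi : Matrix (Fin ℓ) (Fin ℓ) ℝ) = Pplus * P := rfl
      rw [hPiPp, ← Matrix.mul_assoc, ← Matrix.mulVec_mulVec,
        ← Matrix.mulVec_mulVec, hPa, ← Matrix.mulVec_mulVec, hedef]
      simp only [Matrix.mulVec_mulVec]
      rfl
    have hYd : Y *ᵥ (w - wstar) = 0 := by
      rw [Matrix.mulVec_sub, hYwa, hYw, sub_self]
    have hEd : E *ᵥ (w - wstar) = w - wstar := by
      rw [Matrix.mulVec_sub, hEw2, hEw]
    have hcross : wstar ⬝ᵥ (w - wstar) = 0 := by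
      rw [hwdef, dp_shift, hEt, hEd, dp_shift Yᵀ, transpose_transpose, hYd,
        dotProduct_zero]
    have h1 : wstar ⬝ᵥ w = wstar ⬝ᵥ wstar := by
      rw [dotProduct_sub] at hcross; linarith
    have h2 : w ⬝ᵥ wstar = wstar ⬝ᵥ wstar := by
      rw [dotProduct_comm]; exact h1
    have h3 : 0 ≤ (w - wstar) ⬝ᵥ (w - wstar) := dp_self_nonneg _
    have h4 : (w - wstar) ⬝ᵥ (w - wstar)
        = w ⬝ᵥ w - w ⬝ᵥ wstar - (wstar ⬝ᵥ w - wstar ⬝ᵥ wstar) := by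
      rw [sub_dotProduct, dotProduct_sub, dotProduct_sub]
    rw [hval]
    linarith
end

section
/- Let D = [P; Y] ∈ ℝ^{(r+s)×ℓ} have full row rank with P = [W; U] (W ∈ ℝ^{w×ℓ} of full row rank, U ∈ ℝ^{u×ℓ}). Then for every ξ ∈ ℝ^w, u ∈ ℝ^u, y ∈ ℝˢ, min { ‖a‖₂² : Wa = ξ, Ua = u, Ya = y } = (y − YP⁺(ξ,u))ᵀ Q_reg (y − YP⁺(ξ,u)) + (u − UW⁺ξ)ᵀ R_reg (u − UW⁺ξ) + ξᵀ(WWᵀ)⁻¹ξ, where Q_reg := (Y(I−Π_P)Yᵀ)⁻¹ with Π_P := Pᵀ(PPᵀ)⁻¹P, R_reg := (U(I − Wᵀ(WWᵀ)⁻¹W)Uᵀ)⁻¹, and M⁺ denotes the Moore–Penrose pseudoinverse. -/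
open Matrix

section Stmt10Aux

variable {ι κ ρ : Type*} [Fintype ι] [Fintype κ] [Fintype ρ] [DecidableEq ι] [DecidableEq κ] [DecidableEq ρ]

set_option linter.unusedSectionVars false

lemma aux_mulVec_dot (N : Matrix ι κ ℝ) (z : κ → ℝ) (x : ι → ℝ) :
    (N *ᵥ z) ⬝ᵥ x = z ⬝ᵥ (Nᵀ *ᵥ x) := by
  rw [dotProduct_mulVec, vecMul_transpose]

lemma aux_isUnit_of_rank {A : Matrix ι ι ℝ} (h : A.rank = Fintype.card ι) : IsUnit A := by
  rw [← Matrix.mulVec_surjective_iff_isUnit]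
  have ht : LinearMap.range A.mulVecLin = ⊤ := by
    apply Submodule.eq_top_of_finrank_eq
    rw [Module.finrank_fintype_fun_eq_card]
    exact h
  intro x
  obtain ⟨z, hz⟩ := LinearMap.range_eq_top.mp ht x
  exact ⟨z, hz⟩

lemma aux_isUnit_NtN (N : Matrix κ ι ℝ) (h : ∀ z : ι → ℝ, N *ᵥ z = 0 → z = 0) :
    IsUnit (Nᵀ * N) := by
  rw [← Matrix.mulVec_injective_iff_isUnit]
  have key : ∀ z, (Nᵀ * N) *ᵥ z = 0 → z = 0 := by
    intro z hz
    apply h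
    rw [← dotProduct_self_eq_zero]
    calc (N *ᵥ z) ⬝ᵥ (N *ᵥ z) = z ⬝ᵥ ((Nᵀ * N) *ᵥ z) := by
          rw [aux_mulVec_dot, mulVec_mulVec]
      _ = 0 := by rw [hz, dotProduct_zero]
  intro a b hab
  have h0 : (Nᵀ * N) *ᵥ (a - b) = 0 := by
    rw [mulVec_sub]
    rw [sub_eq_zero]
    exact hab
  have := key _ h0
  exact sub_eq_zero.mp this

lemma aux_proj_mul (M : Matrix ι κ ℝ) (h : IsUnit (M * Mᵀ)) :
    M * (1 - Mᵀ * (M * Mᵀ)⁻¹ * M) = 0 := by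
  have hd := (Matrix.isUnit_iff_isUnit_det _).mp h
  rw [Matrix.mul_sub, Matrix.mul_one, ← Matrix.mul_assoc, ← Matrix.mul_assoc,
    Matrix.mul_nonsing_inv _ hd, Matrix.one_mul, sub_self]

lemma aux_proj_symm (M : Matrix ι κ ℝ) (_h : IsUnit (M * Mᵀ)) :
    (1 - Mᵀ * (M * Mᵀ)⁻¹ * M)ᵀ = 1 - Mᵀ * (M * Mᵀ)⁻¹ * M := by
  have h1 : ((M * Mᵀ)⁻¹)ᵀ = (M * Mᵀ)⁻¹ := by
    rw [Matrix.transpose_nonsing_inv, Matrix.transpose_mul, Matrix.transpose_transpose]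
  rw [Matrix.transpose_sub, Matrix.transpose_one, Matrix.transpose_mul, Matrix.transpose_mul,
    Matrix.transpose_transpose, h1, Matrix.mul_assoc]

lemma aux_proj_idem (M : Matrix ι κ ℝ) (h : IsUnit (M * Mᵀ)) :
    (1 - Mᵀ * (M * Mᵀ)⁻¹ * M) * (1 - Mᵀ * (M * Mᵀ)⁻¹ * M) = 1 - Mᵀ * (M * Mᵀ)⁻¹ * M := by
  rw [Matrix.sub_mul, Matrix.one_mul,
    Matrix.mul_assoc (Mᵀ * (M * Mᵀ)⁻¹) M (1 - Mᵀ * (M * Mᵀ)⁻¹ * M),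
    aux_proj_mul M h, Matrix.mul_zero, sub_zero]

lemma aux_sol (B : Matrix ρ κ ℝ) (K : Matrix κ κ ℝ) (hU : IsUnit (B * K * Bᵀ)) (r : ρ → ℝ) :
    B *ᵥ (K *ᵥ (Bᵀ *ᵥ ((B * K * Bᵀ)⁻¹ *ᵥ r))) = r := by
  have hd := (Matrix.isUnit_iff_isUnit_det _).mp hU
  rw [mulVec_mulVec, mulVec_mulVec, mulVec_mulVec, Matrix.mul_nonsing_inv _ hd, one_mulVec]

lemma aux_quad (B : Matrix ρ κ ℝ) (K : Matrix κ κ ℝ) (hKs : Kᵀ = K) (hKi : K * K = K)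
    (hU : IsUnit (B * K * Bᵀ)) (r : ρ → ℝ) :
    (K *ᵥ (Bᵀ *ᵥ ((B * K * Bᵀ)⁻¹ *ᵥ r))) ⬝ᵥ (K *ᵥ (Bᵀ *ᵥ ((B * K * Bᵀ)⁻¹ *ᵥ r)))
      = r ⬝ᵥ ((B * K * Bᵀ)⁻¹ *ᵥ r) := by
  rw [aux_mulVec_dot K]
  rw [hKs, mulVec_mulVec (Bᵀ *ᵥ ((B * K * Bᵀ)⁻¹ *ᵥ r)) K K, hKi]
  rw [aux_mulVec_dot Bᵀ, transpose_transpose, aux_sol B K hU r, dotProduct_comm]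

lemma aux_expand (p d : κ → ℝ) :
    (p + d) ⬝ᵥ (p + d) = p ⬝ᵥ p + 2 * (p ⬝ᵥ d) + d ⬝ᵥ d := by
  rw [add_dotProduct, dotProduct_add, dotProduct_add, dotProduct_comm d p]
  ring

lemma aux_unique (M : Matrix ι κ ℝ) (h : IsUnit (M * Mᵀ)) {c1 c2 : ι → ℝ}
    (heq : M *ᵥ (Mᵀ *ᵥ c1) = M *ᵥ (Mᵀ *ᵥ c2)) : Mᵀ *ᵥ c1 = Mᵀ *ᵥ c2 := by
  have hinj := Matrix.mulVec_injective_iff_isUnit.mpr h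
  have h2 : (M * Mᵀ) *ᵥ c1 = (M * Mᵀ) *ᵥ c2 := by
    rw [← mulVec_mulVec, ← mulVec_mulVec]; exact heq
  rw [hinj h2]

lemma aux_schur_isUnit (M : Matrix ι κ ℝ) (B : Matrix ρ κ ℝ)
    (hM : IsUnit (M * Mᵀ))
    (hker : ∀ (c : ι → ℝ) (z : ρ → ℝ), -(Mᵀ *ᵥ c) + Bᵀ *ᵥ z = 0 → z = 0) :
    IsUnit (B * (1 - Mᵀ * (M * Mᵀ)⁻¹ * M) * Bᵀ) := by
  have hKs := aux_proj_symm M hM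
  have hKi := aux_proj_idem M hM
  have key : ∀ z : ρ → ℝ, ((1 - Mᵀ * (M * Mᵀ)⁻¹ * M) * Bᵀ) *ᵥ z = 0 → z = 0 := by
    intro z hz
    apply hker ((M * Mᵀ)⁻¹ *ᵥ (M *ᵥ (Bᵀ *ᵥ z))) z
    have h1 : (1 - Mᵀ * (M * Mᵀ)⁻¹ * M) *ᵥ (Bᵀ *ᵥ z) = 0 := by
      rw [mulVec_mulVec]; exact hz
    rw [Matrix.sub_mulVec, one_mulVec, ← mulVec_mulVec, ← mulVec_mulVec] at h1
    rw [neg_add_eq_sub]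
    exact h1
  have h2 := aux_isUnit_NtN _ key
  rw [transpose_mul, transpose_transpose, hKs, ← Matrix.mul_assoc, Matrix.mul_assoc B, hKi] at h2
  exact h2

lemma aux_main {w u s ℓ : ℕ}
    (W : Matrix (Fin w) (Fin ℓ) ℝ) (U : Matrix (Fin u) (Fin ℓ) ℝ)
    (Y : Matrix (Fin s) (Fin ℓ) ℝ)
    (hWWt : IsUnit (W * Wᵀ))
    (hPPt : IsUnit (Matrix.fromRows W U * (Matrix.fromRows W U)ᵀ))
    (hRmat : IsUnit (U * (1 - Wᵀ * (W * Wᵀ)⁻¹ * W) * Uᵀ))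
    (hQmat : IsUnit (Y * (1 - (Matrix.fromRows W U)ᵀ *
        (Matrix.fromRows W U * (Matrix.fromRows W U)ᵀ)⁻¹ * Matrix.fromRows W U) * Yᵀ))
    (ξ : Fin w → ℝ) (uf : Fin u → ℝ) (y : Fin s → ℝ) :
    IsLeast {v : ℝ | ∃ a : Fin ℓ → ℝ,
        W *ᵥ a = ξ ∧ U *ᵥ a = uf ∧ Y *ᵥ a = y ∧ v = a ⬝ᵥ a}
      ((y - Y *ᵥ ((Matrix.fromRows W U)ᵀ *ᵥ
            ((Matrix.fromRows W U * (Matrix.fromRows W U)ᵀ)⁻¹ *ᵥ Sum.elim ξ uf))) ⬝ᵥ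
          ((Y * (1 - (Matrix.fromRows W U)ᵀ *
              (Matrix.fromRows W U * (Matrix.fromRows W U)ᵀ)⁻¹ * Matrix.fromRows W U) * Yᵀ)⁻¹ *ᵥ
            (y - Y *ᵥ ((Matrix.fromRows W U)ᵀ *ᵥ
              ((Matrix.fromRows W U * (Matrix.fromRows W U)ᵀ)⁻¹ *ᵥ Sum.elim ξ uf))))
        + (uf - U *ᵥ (Wᵀ *ᵥ ((W * Wᵀ)⁻¹ *ᵥ ξ))) ⬝ᵥ
            ((U * (1 - Wᵀ * (W * Wᵀ)⁻¹ * W) * Uᵀ)⁻¹ *ᵥ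
              (uf - U *ᵥ (Wᵀ *ᵥ ((W * Wᵀ)⁻¹ *ᵥ ξ))))
        + ξ ⬝ᵥ ((W * Wᵀ)⁻¹ *ᵥ ξ)) := by
  set P : Matrix (Fin w ⊕ Fin u) (Fin ℓ) ℝ := Matrix.fromRows W U with hP
  have hPdet := (Matrix.isUnit_iff_isUnit_det _).mp hPPt
  have hWdet := (Matrix.isUnit_iff_isUnit_det _).mp hWWt
  set KW : Matrix (Fin ℓ) (Fin ℓ) ℝ := 1 - Wᵀ * (W * Wᵀ)⁻¹ * W with hKW
  set KP : Matrix (Fin ℓ) (Fin ℓ) ℝ := 1 - Pᵀ * (P * Pᵀ)⁻¹ * P with hKP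
  have hKPs : KPᵀ = KP := by rw [hKP]; exact aux_proj_symm P hPPt
  have hKPi : KP * KP = KP := by rw [hKP]; exact aux_proj_idem P hPPt
  have hKWs : KWᵀ = KW := by rw [hKW]; exact aux_proj_symm W hWWt
  have hKWi : KW * KW = KW := by rw [hKW]; exact aux_proj_idem W hWWt
  have hWKW : W * KW = 0 := by rw [hKW]; exact aux_proj_mul W hWWt
  have hPKP : P * KP = 0 := by rw [hKP]; exact aux_proj_mul P hPPt
  have hWKP : W * KP = 0 := by
    have h0 : Matrix.fromRows (W * KP) (U * KP) = 0 := by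
      rw [← Matrix.fromRows_mul, ← hP, hPKP]
    ext i j
    exact congrFun (congrFun h0 (Sum.inl i)) j
  have hUKP : U * KP = 0 := by
    have h0 : Matrix.fromRows (W * KP) (U * KP) = 0 := by
      rw [← Matrix.fromRows_mul, ← hP, hPKP]
    ext i j
    exact congrFun (congrFun h0 (Sum.inr i)) j
  set b : (Fin w ⊕ Fin u) → ℝ := Sum.elim ξ uf with hb
  set b1 : Fin ℓ → ℝ := Wᵀ *ᵥ ((W * Wᵀ)⁻¹ *ᵥ ξ) with hb1
  set x1 : Fin ℓ → ℝ := Pᵀ *ᵥ ((P * Pᵀ)⁻¹ *ᵥ b) with hx1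
  set r2 : Fin u → ℝ := uf - U *ᵥ b1 with hr2
  set r3 : Fin s → ℝ := y - Y *ᵥ x1 with hr3
  set g2 : Fin u → ℝ := (U * KW * Uᵀ)⁻¹ *ᵥ r2 with hg2
  set g3 : Fin s → ℝ := (Y * KP * Yᵀ)⁻¹ *ᵥ r3 with hg3
  set b2 : Fin ℓ → ℝ := KW *ᵥ (Uᵀ *ᵥ g2) with hb2
  set x3 : Fin ℓ → ℝ := KP *ᵥ (Yᵀ *ᵥ g3) with hx3
  -- basic constraint facts
  have hWb1 : W *ᵥ b1 = ξ := by
    rw [hb1, mulVec_mulVec, mulVec_mulVec, Matrix.mul_nonsing_inv _ hWdet, one_mulVec]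
  have hPx1 : P *ᵥ x1 = b := by
    rw [hx1, mulVec_mulVec, mulVec_mulVec, Matrix.mul_nonsing_inv _ hPdet, one_mulVec]
  have hPx1' : Sum.elim (W *ᵥ x1) (U *ᵥ x1) = Sum.elim ξ uf := by
    rw [← Matrix.fromRows_mulVec, ← hP, hPx1, hb]
  have hWx1 : W *ᵥ x1 = ξ := funext fun i => congrFun hPx1' (Sum.inl i)
  have hUx1 : U *ᵥ x1 = uf := funext fun i => congrFun hPx1' (Sum.inr i)
  have hUb2 : U *ᵥ b2 = r2 := by rw [hb2, hg2]; exact aux_sol U KW hRmat r2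
  have hYx3 : Y *ᵥ x3 = r3 := by rw [hx3, hg3]; exact aux_sol Y KP hQmat r3
  have hWb2 : W *ᵥ b2 = 0 := by rw [hb2, mulVec_mulVec, hWKW, zero_mulVec]
  have hWx3 : W *ᵥ x3 = 0 := by rw [hx3, mulVec_mulVec, hWKP, zero_mulVec]
  have hUx3 : U *ᵥ x3 = 0 := by rw [hx3, mulVec_mulVec, hUKP, zero_mulVec]
  have hPx3 : P *ᵥ x3 = 0 := by rw [hx3, mulVec_mulVec, hPKP, zero_mulVec]
  -- x1 = b1 + b2
  have hsum : b1 + b2 = Pᵀ *ᵥ Sum.elim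
      ((W * Wᵀ)⁻¹ *ᵥ ξ - (W * Wᵀ)⁻¹ *ᵥ (W *ᵥ (Uᵀ *ᵥ g2))) g2 := by
    rw [hP, transpose_fromRows, fromCols_mulVec_sumElim, mulVec_sub, hb1, hb2, hKW,
      Matrix.sub_mulVec, one_mulVec, ← mulVec_mulVec, ← mulVec_mulVec]
    abel
  have hPsum : P *ᵥ (b1 + b2) = b := by
    rw [Matrix.mulVec_add, hP, Matrix.fromRows_mulVec, Matrix.fromRows_mulVec, hWb1, hWb2,
      hUb2, hb, hr2]
    funext i
    cases i <;> simp
  have hx1eq : x1 = b1 + b2 := by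
    rw [hx1, hsum]
    apply aux_unique P hPPt
    rw [← hx1, ← hsum, hPx1, hPsum]
  -- orthogonality
  have horth13 : x1 ⬝ᵥ x3 = 0 := by
    rw [hx1, aux_mulVec_dot, transpose_transpose, hPx3, dotProduct_zero]
  have horth12 : b1 ⬝ᵥ b2 = 0 := by
    rw [hb1, aux_mulVec_dot, transpose_transpose, hWb2, dotProduct_zero]
  -- values
  have hval3 : x3 ⬝ᵥ x3 = r3 ⬝ᵥ ((Y * KP * Yᵀ)⁻¹ *ᵥ r3) := by
    rw [hx3, hg3]
    exact aux_quad Y KP hKPs hKPi hQmat r3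
  have hval2 : b2 ⬝ᵥ b2 = r2 ⬝ᵥ ((U * KW * Uᵀ)⁻¹ *ᵥ r2) := by
    rw [hb2, hg2]
    exact aux_quad U KW hKWs hKWi hRmat r2
  have hval1 : b1 ⬝ᵥ b1 = ξ ⬝ᵥ ((W * Wᵀ)⁻¹ *ᵥ ξ) := by
    rw [hb1, aux_mulVec_dot, transpose_transpose, mulVec_mulVec, mulVec_mulVec,
      Matrix.mul_nonsing_inv _ hWdet, one_mulVec, dotProduct_comm]
  have hastar : (x1 + x3) ⬝ᵥ (x1 + x3)
      = r3 ⬝ᵥ ((Y * KP * Yᵀ)⁻¹ *ᵥ r3) + r2 ⬝ᵥ ((U * KW * Uᵀ)⁻¹ *ᵥ r2)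
        + ξ ⬝ᵥ ((W * Wᵀ)⁻¹ *ᵥ ξ) := by
    have e1 : (x1 + x3) ⬝ᵥ (x1 + x3) = x1 ⬝ᵥ x1 + x3 ⬝ᵥ x3 := by
      rw [add_dotProduct, dotProduct_add, dotProduct_add, horth13, dotProduct_comm x3 x1,
        horth13]
      ring
    have e2 : x1 ⬝ᵥ x1 = b1 ⬝ᵥ b1 + b2 ⬝ᵥ b2 := by
      rw [hx1eq, add_dotProduct, dotProduct_add, dotProduct_add, horth12,
        dotProduct_comm b2 b1, horth12]
      ring
    rw [e1, e2, hval1, hval2, hval3]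
    ring
  -- the goal is already folded by `set`
  constructor
  · refine ⟨x1 + x3, ?_, ?_, ?_, hastar.symm⟩
    · rw [mulVec_add, hWx1, hWx3, add_zero]
    · rw [mulVec_add, hUx1, hUx3, add_zero]
    · rw [mulVec_add, hYx3, hr3]
      abel
  · rintro v ⟨a, ha1, ha2, ha3, rfl⟩
    set d : Fin ℓ → ℝ := a - (x1 + x3) with hd
    have hWd : W *ᵥ d = 0 := by
      rw [hd, mulVec_sub, ha1, mulVec_add, hWx1, hWx3, add_zero, sub_self]
    have hUd : U *ᵥ d = 0 := by
      rw [hd, mulVec_sub, ha2, mulVec_add, hUx1, hUx3, add_zero, sub_self]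
    have hYd : Y *ᵥ d = 0 := by
      rw [hd, mulVec_sub, ha3, mulVec_add, hYx3, hr3]
      abel
    have hPd : P *ᵥ d = 0 := by
      rw [hP, Matrix.fromRows_mulVec, hWd, hUd]
      funext i
      cases i <;> rfl
    have h1d : x1 ⬝ᵥ d = 0 := by
      rw [hx1, aux_mulVec_dot, transpose_transpose, hPd, dotProduct_zero]
    have h3d : x3 ⬝ᵥ d = 0 := by
      have hKPd : KP *ᵥ d = d := by
        rw [hKP, Matrix.sub_mulVec, one_mulVec, ← mulVec_mulVec, ← mulVec_mulVec, hPd,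
          mulVec_zero, mulVec_zero, sub_zero]
      rw [hx3, aux_mulVec_dot, hKPs, hKPd, aux_mulVec_dot, transpose_transpose, hYd,
        dotProduct_zero]
    have horthd : (x1 + x3) ⬝ᵥ d = 0 := by
      rw [add_dotProduct, h1d, h3d, add_zero]
    have ha : a = (x1 + x3) + d := by rw [hd]; abel
    have expand : a ⬝ᵥ a
        = (x1 + x3) ⬝ᵥ (x1 + x3) + 2 * ((x1 + x3) ⬝ᵥ d) + d ⬝ᵥ d := by
      rw [ha]
      exact aux_expand (x1 + x3) d
    have hdd : (0 : ℝ) ≤ d ⬝ᵥ d := by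
      have hq : d ⬝ᵥ d = ∑ i, d i * d i := rfl
      rw [hq]
      exact Finset.sum_nonneg fun i _ => mul_self_nonneg _
    rw [expand, horthd, ← hastar]
    linarith

end Stmt10Aux

/-- Closed form (eq. (8)) of the 2-norm regularizer elimination: with
`D = [W; U; Y]` of full row rank and `W` of full row rank,
`min { ‖a‖² : Wa = ξ, Ua = u, Ya = y }` decomposes into an output-deviation
term, an input-deviation term, and a state term. -/
theorem stmt_10 (w u s ℓ : ℕ)
    (W : Matrix (Fin w) (Fin ℓ) ℝ) (U : Matrix (Fin u) (Fin ℓ) ℝ)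
    (Y : Matrix (Fin s) (Fin ℓ) ℝ)
    (hW : W.rank = w)
    (hrank : (Matrix.fromRows (Matrix.fromRows W U) Y).rank = (w + u) + s) :
    let P : Matrix (Fin w ⊕ Fin u) (Fin ℓ) ℝ := Matrix.fromRows W U
    let PiP : Matrix (Fin ℓ) (Fin ℓ) ℝ := Pᵀ * (P * Pᵀ)⁻¹ * P
    let Pplus : Matrix (Fin ℓ) (Fin w ⊕ Fin u) ℝ := Pᵀ * (P * Pᵀ)⁻¹
    let Wplus : Matrix (Fin ℓ) (Fin w) ℝ := Wᵀ * (W * Wᵀ)⁻¹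
    let Qreg : Matrix (Fin s) (Fin s) ℝ := (Y * (1 - PiP) * Yᵀ)⁻¹
    let Rreg : Matrix (Fin u) (Fin u) ℝ :=
      (U * (1 - Wᵀ * (W * Wᵀ)⁻¹ * W) * Uᵀ)⁻¹
    ∀ (ξ : Fin w → ℝ) (uf : Fin u → ℝ) (y : Fin s → ℝ),
      IsLeast {v : ℝ | ∃ a : Fin ℓ → ℝ,
          W *ᵥ a = ξ ∧ U *ᵥ a = uf ∧ Y *ᵥ a = y ∧ v = a ⬝ᵥ a}
        ((y - Y *ᵥ (Pplus *ᵥ Sum.elim ξ uf)) ⬝ᵥ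
            (Qreg *ᵥ (y - Y *ᵥ (Pplus *ᵥ Sum.elim ξ uf)))
          + (uf - U *ᵥ (Wplus *ᵥ ξ)) ⬝ᵥ (Rreg *ᵥ (uf - U *ᵥ (Wplus *ᵥ ξ)))
          + ξ ⬝ᵥ ((W * Wᵀ)⁻¹ *ᵥ ξ)) := by
  intro P PiP Pplus Wplus Qreg Rreg ξ uf y
  -- invertibility facts
  have hWWt : IsUnit (W * Wᵀ) := aux_isUnit_of_rank
    (by rw [rank_self_mul_transpose, hW, Fintype.card_fin])
  have hDDt : IsUnit (Matrix.fromRows (Matrix.fromRows W U) Y *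
      (Matrix.fromRows (Matrix.fromRows W U) Y)ᵀ) := aux_isUnit_of_rank (by
    rw [rank_self_mul_transpose, hrank]
    simp)
  have hDker : ∀ v : (Fin w ⊕ Fin u) ⊕ Fin s → ℝ,
      v ᵥ* Matrix.fromRows (Matrix.fromRows W U) Y = 0 → v = 0 := by
    intro v hv
    have hinj := Matrix.vecMul_injective_iff_isUnit.mpr hDDt
    apply hinj
    show v ᵥ* (Matrix.fromRows (Matrix.fromRows W U) Y *
        (Matrix.fromRows (Matrix.fromRows W U) Y)ᵀ)
      = (0 : ((Fin w ⊕ Fin u) ⊕ Fin s) → ℝ) ᵥ* (Matrix.fromRows (Matrix.fromRows W U) Y *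
        (Matrix.fromRows (Matrix.fromRows W U) Y)ᵀ)
    rw [← vecMul_vecMul, hv, zero_vecMul, zero_vecMul]
  have hPker : ∀ v : Fin w ⊕ Fin u → ℝ, v ᵥ* Matrix.fromRows W U = 0 → v = 0 := by
    intro v hv
    have h0 : Sum.elim v (0 : Fin s → ℝ) ᵥ* Matrix.fromRows (Matrix.fromRows W U) Y = 0 := by
      rw [sumElim_vecMul_fromRows, hv, zero_vecMul, add_zero]
    have h1 := hDker _ h0
    funext i
    exact congrFun h1 (Sum.inl i)
  have hPPt : IsUnit (Matrix.fromRows W U * (Matrix.fromRows W U)ᵀ) := by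
    have h := aux_isUnit_NtN (Matrix.fromRows W U)ᵀ
      (fun z hz => hPker z (by rwa [← mulVec_transpose]))
    rwa [transpose_transpose] at h
  have hRmat : IsUnit (U * (1 - Wᵀ * (W * Wᵀ)⁻¹ * W) * Uᵀ) := by
    apply aux_schur_isUnit W U hWWt
    intro c z h0
    have hv : Sum.elim (-c) z ᵥ* Matrix.fromRows W U = 0 := by
      rw [sumElim_vecMul_fromRows, Matrix.neg_vecMul, ← mulVec_transpose, ← mulVec_transpose]
      exact h0
    have h1 := hPker _ hv
    funext i
    exact congrFun h1 (Sum.inr i)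
  have hQmat : IsUnit (Y * (1 - (Matrix.fromRows W U)ᵀ *
      (Matrix.fromRows W U * (Matrix.fromRows W U)ᵀ)⁻¹ * Matrix.fromRows W U) * Yᵀ) := by
    apply aux_schur_isUnit (Matrix.fromRows W U) Y hPPt
    intro c z h0
    have hv : Sum.elim (-c) z ᵥ* Matrix.fromRows (Matrix.fromRows W U) Y = 0 := by
      rw [sumElim_vecMul_fromRows, Matrix.neg_vecMul, ← mulVec_transpose, ← mulVec_transpose]
      exact h0
    have h1 := hDker _ hv
    funext i
    exact congrFun h1 (Sum.inr i)
  -- rewrite the goal value into the aux_main form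
  have hx : Pplus *ᵥ Sum.elim ξ uf
      = (Matrix.fromRows W U)ᵀ *ᵥ
          ((Matrix.fromRows W U * (Matrix.fromRows W U)ᵀ)⁻¹ *ᵥ Sum.elim ξ uf) := by
    show ((Matrix.fromRows W U)ᵀ * (Matrix.fromRows W U * (Matrix.fromRows W U)ᵀ)⁻¹) *ᵥ
        Sum.elim ξ uf = _
    rw [mulVec_mulVec]
  have hw' : Wplus *ᵥ ξ = Wᵀ *ᵥ ((W * Wᵀ)⁻¹ *ᵥ ξ) := by
    show (Wᵀ * (W * Wᵀ)⁻¹) *ᵥ ξ = _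
    rw [mulVec_mulVec]
  rw [hx, hw']
  exact aux_main W U Y hWWt hPPt hRmat hQmat ξ uf y
end

section
/- Let Q, Q_reg be symmetric p×p matrices with Q positive semidefinite, Q_reg positive definite, λ > 0, and let ŷ_SPC : ℝ^w × ℝᵐ → ℝᵖ be affine and y_ref ∈ ℝᵖ. Then for each (ξ, u), the unique minimizer over y ∈ ℝᵖ of ‖y − y_ref‖²_Q + λ‖y − ŷ_SPC(ξ,u)‖²_{Q_reg} is ŷ_DPC(ξ, u) = (λQ_reg + Q)⁻¹(λQ_reg ŷ_SPC(ξ,u) + Q y_ref), and ŷ_DPC is an affine function of (ξ, u). -/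
open Matrix

private lemma symm_swap {p : ℕ} (A : Matrix (Fin p) (Fin p) ℝ) (hA : A.IsSymm)
    (x y : Fin p → ℝ) : x ⬝ᵥ (A *ᵥ y) = y ⬝ᵥ (A *ᵥ x) := by
  rw [dotProduct_mulVec, ← mulVec_transpose, hA.eq, dotProduct_comm]

/-- Theorem 1 (implicit predictor): for each `(ξ, u)`, the unique minimizer
over `y` of `‖y − y_ref‖²_Q + λ‖y − ŷ_SPC(ξ,u)‖²_{Q_reg}` is
`ŷ_DPC(ξ,u) = (λQ_reg + Q)⁻¹(λ Q_reg ŷ_SPC(ξ,u) + Q y_ref)`, which is an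
affine function of `(ξ, u)`. -/
theorem stmt_11 (p w m : ℕ) (Q Qreg : Matrix (Fin p) (Fin p) ℝ)
    (hQs : Q.IsSymm) (hQregs : Qreg.IsSymm)
    (hQ : Q.PosSemidef) (hQreg : Qreg.PosDef)
    (lam : ℝ) (hlam : 0 < lam)
    (yspc : (Fin w → ℝ) → (Fin m → ℝ) → (Fin p → ℝ))
    (haff : ∃ (A : Matrix (Fin p) (Fin w) ℝ) (B : Matrix (Fin p) (Fin m) ℝ)
        (c : Fin p → ℝ), ∀ ξ u, yspc ξ u = A *ᵥ ξ + B *ᵥ u + c)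
    (yref : Fin p → ℝ) :
    let ydpc : (Fin w → ℝ) → (Fin m → ℝ) → (Fin p → ℝ) :=
      fun ξ u => (lam • Qreg + Q)⁻¹ *ᵥ (lam • (Qreg *ᵥ yspc ξ u) + Q *ᵥ yref)
    let f : (Fin w → ℝ) → (Fin m → ℝ) → (Fin p → ℝ) → ℝ :=
      fun ξ u y => (y - yref) ⬝ᵥ (Q *ᵥ (y - yref))
        + lam * ((y - yspc ξ u) ⬝ᵥ (Qreg *ᵥ (y - yspc ξ u)))
    (∀ ξ u, (∀ y, f ξ u (ydpc ξ u) ≤ f ξ u y) ∧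
        (∀ y, f ξ u y = f ξ u (ydpc ξ u) → y = ydpc ξ u)) ∧
    (∃ (A' : Matrix (Fin p) (Fin w) ℝ) (B' : Matrix (Fin p) (Fin m) ℝ)
        (c' : Fin p → ℝ), ∀ ξ u, ydpc ξ u = A' *ᵥ ξ + B' *ᵥ u + c') := by
  intro ydpc f
  set M : Matrix (Fin p) (Fin p) ℝ := lam • Qreg + Q with hMdef
  have hMsymm : M.IsSymm := by
    unfold Matrix.IsSymm
    rw [hMdef, transpose_add, transpose_smul, hQregs.eq, hQs.eq]
  have hMpd : M.PosDef := by
    refine Matrix.PosDef.add_posSemidef ?_ hQ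
    refine Matrix.PosDef.of_dotProduct_mulVec_pos ?_ (fun x hx => ?_)
    · unfold Matrix.IsHermitian
      rw [conjTranspose_smul]
      simp [hQregs.eq]
    · simp only [smul_mulVec, dotProduct_smul, smul_eq_mul]
      exact mul_pos hlam (hQreg.dotProduct_mulVec_pos hx)
  have hMinv : M * M⁻¹ = 1 := Matrix.mul_nonsing_inv M (Ne.isUnit hMpd.det_pos.ne')
  -- ydpc satisfies the normal equations
  have hnorm : ∀ ξ u, M *ᵥ ydpc ξ u = lam • (Qreg *ᵥ yspc ξ u) + Q *ᵥ yref := by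
    intro ξ u
    show M *ᵥ (M⁻¹ *ᵥ _) = _
    rw [mulVec_mulVec, hMinv, one_mulVec]
  -- key identity: f ξ u y = f ξ u (ydpc ξ u) + (y - ydpc) ⬝ᵥ M (y - ydpc)
  have key : ∀ ξ u y, f ξ u y =
      f ξ u (ydpc ξ u) + (y - ydpc ξ u) ⬝ᵥ (M *ᵥ (y - ydpc ξ u)) := by
    intro ξ u y
    set ys := yspc ξ u with hys
    set z := ydpc ξ u with hz
    have hMz : Q *ᵥ z + lam • (Qreg *ᵥ z) = lam • (Qreg *ᵥ ys) + Q *ᵥ yref := by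
      have := hnorm ξ u
      rw [hMdef] at this
      rw [← this, add_mulVec, smul_mulVec]
      exact add_comm _ _
    show (y - yref) ⬝ᵥ (Q *ᵥ (y - yref)) + lam * ((y - ys) ⬝ᵥ (Qreg *ᵥ (y - ys)))
        = ((z - yref) ⬝ᵥ (Q *ᵥ (z - yref)) + lam * ((z - ys) ⬝ᵥ (Qreg *ᵥ (z - ys))))
          + (y - z) ⬝ᵥ ((lam • Qreg + Q) *ᵥ (y - z))
    simp only [sub_eq_add_neg, mulVec_add, mulVec_neg, dotProduct_add, dotProduct_neg,
      add_dotProduct, neg_dotProduct, add_mulVec, smul_mulVec, dotProduct_smul,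
      smul_eq_mul, neg_neg, neg_add]
    have e1 := symm_swap Q hQs y yref
    have e2 := symm_swap Q hQs z yref
    have e3 := symm_swap Q hQs y z
    have e4 := symm_swap Qreg hQregs y ys
    have e5 := symm_swap Qreg hQregs z ys
    have e6 := symm_swap Qreg hQregs y z
    have hQz : z ⬝ᵥ (Q *ᵥ z) + lam * (z ⬝ᵥ (Qreg *ᵥ z))
        = lam * (z ⬝ᵥ (Qreg *ᵥ ys)) + z ⬝ᵥ (Q *ᵥ yref) := by
      have := congrArg (fun v => z ⬝ᵥ v) hMz
      simpa [dotProduct_add, dotProduct_smul] using this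
    have hQy : y ⬝ᵥ (Q *ᵥ z) + lam * (y ⬝ᵥ (Qreg *ᵥ z))
        = lam * (y ⬝ᵥ (Qreg *ᵥ ys)) + y ⬝ᵥ (Q *ᵥ yref) := by
      have := congrArg (fun v => y ⬝ᵥ v) hMz
      simpa [dotProduct_add, dotProduct_smul] using this
    simp only [e1, e2, e3, e4, e5, e6] at hQy hQz ⊢
    linarith [hQy, hQz]
  constructor
  · intro ξ u
    constructor
    · intro y
      rw [key ξ u y]
      have h := hMpd.posSemidef.dotProduct_mulVec_nonneg (y - ydpc ξ u)
      simp only [star_trivial] at h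
      have h' : 0 ≤ (y - ydpc ξ u) ⬝ᵥ (M *ᵥ (y - ydpc ξ u)) := by
        simpa using h
      linarith
    · intro y hy
      rw [key ξ u y] at hy
      have h0 : (y - ydpc ξ u) ⬝ᵥ (M *ᵥ (y - ydpc ξ u)) = 0 := by linarith
      by_contra hne
      have hxne : y - ydpc ξ u ≠ 0 := sub_ne_zero_of_ne hne
      have := hMpd.dotProduct_mulVec_pos hxne
      simp only [star_trivial] at this
      have : 0 < (y - ydpc ξ u) ⬝ᵥ (M *ᵥ (y - ydpc ξ u)) := by simpa using this
      linarith
  · obtain ⟨A, B, c, hABc⟩ := haff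
    refine ⟨M⁻¹ * (lam • Qreg) * A, M⁻¹ * (lam • Qreg) * B,
      M⁻¹ *ᵥ (lam • (Qreg *ᵥ c) + Q *ᵥ yref), fun ξ u => ?_⟩
    show M⁻¹ *ᵥ (lam • (Qreg *ᵥ yspc ξ u) + Q *ᵥ yref) = _
    rw [hABc]
    simp only [mulVec_add, smul_add, ← smul_mulVec, mulVec_mulVec,
      Matrix.smul_mul, Matrix.mul_smul, Matrix.mul_assoc]
    abel
end

section
/- Let f(u, y) := ‖y − y_ref‖²_Q + g(u) + λ‖y − ŷ_SPC(ξ,u)‖²_{Q_reg} where Q ⪰ 0, Q_reg ≻ 0, λ > 0, g : ℝᵐ → ℝ arbitrary, and ŷ_SPC affine in u. Let ŷ_DPC(u) := (λQ_reg + Q)⁻¹(λQ_reg ŷ_SPC(ξ,u) + Q y_ref). Then for any set U ⊆ ℝᵐ: (u*, y*) minimizes f over U × ℝᵖ if and only if u* minimizes u ↦ f(u, ŷ_DPC(u)) over U and y* = ŷ_DPC(u*). In particular, the optimal values of the two problems coincide. -/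
open Matrix

lemma dot_symm {p : ℕ} (M : Matrix (Fin p) (Fin p) ℝ) (hM : M.IsSymm)
    (x y : Fin p → ℝ) : x ⬝ᵥ (M *ᵥ y) = y ⬝ᵥ (M *ᵥ x) := by
  rw [dotProduct_mulVec, ← mulVec_transpose, hM.eq, dotProduct_comm]

lemma aux_quad_s12 (p : ℕ) (Q Qreg : Matrix (Fin p) (Fin p) ℝ)
    (hQs : Q.IsSymm) (hQregs : Qreg.IsSymm)
    (hQ : Q.PosSemidef) (hQreg : Qreg.PosDef)
    (lam : ℝ) (hlam : 0 < lam) (s yref : Fin p → ℝ) (y : Fin p → ℝ) :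
    ((lam • Qreg + Q)⁻¹ *ᵥ (lam • (Qreg *ᵥ s) + Q *ᵥ yref) - yref) ⬝ᵥ
        (Q *ᵥ ((lam • Qreg + Q)⁻¹ *ᵥ (lam • (Qreg *ᵥ s) + Q *ᵥ yref) - yref))
      + lam * (((lam • Qreg + Q)⁻¹ *ᵥ (lam • (Qreg *ᵥ s) + Q *ᵥ yref) - s) ⬝ᵥ
        (Qreg *ᵥ ((lam • Qreg + Q)⁻¹ *ᵥ (lam • (Qreg *ᵥ s) + Q *ᵥ yref) - s)))
      ≤ (y - yref) ⬝ᵥ (Q *ᵥ (y - yref)) + lam * ((y - s) ⬝ᵥ (Qreg *ᵥ (y - s)))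
    ∧ ((y - yref) ⬝ᵥ (Q *ᵥ (y - yref)) + lam * ((y - s) ⬝ᵥ (Qreg *ᵥ (y - s)))
        ≤ ((lam • Qreg + Q)⁻¹ *ᵥ (lam • (Qreg *ᵥ s) + Q *ᵥ yref) - yref) ⬝ᵥ
            (Q *ᵥ ((lam • Qreg + Q)⁻¹ *ᵥ (lam • (Qreg *ᵥ s) + Q *ᵥ yref) - yref))
          + lam * (((lam • Qreg + Q)⁻¹ *ᵥ (lam • (Qreg *ᵥ s) + Q *ᵥ yref) - s) ⬝ᵥ
            (Qreg *ᵥ ((lam • Qreg + Q)⁻¹ *ᵥ (lam • (Qreg *ᵥ s) + Q *ᵥ yref) - s)))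
        → y = (lam • Qreg + Q)⁻¹ *ᵥ (lam • (Qreg *ᵥ s) + Q *ᵥ yref)) := by
  set A : Matrix (Fin p) (Fin p) ℝ := lam • Qreg + Q with hAdef
  have hA : A.PosDef := by
    refine Matrix.PosDef.of_dotProduct_mulVec_pos ?_ ?_
    · simp [Matrix.IsHermitian, conjTranspose_add, conjTranspose_smul, hQreg.1.eq, hQ.1.eq, hQregs.eq, hQs.eq,
        hAdef]
    · intro x hx
      have h1 := hQreg.dotProduct_mulVec_pos hx
      have h2 := hQ.dotProduct_mulVec_nonneg x
      simp only [star_trivial] at h1 h2 ⊢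
      simp only [hAdef, add_mulVec, smul_mulVec, dotProduct_add, dotProduct_smul,
        smul_eq_mul]
      exact add_pos_of_pos_of_nonneg (mul_pos hlam h1) h2
  have hdet : IsUnit A.det := isUnit_iff_ne_zero.mpr hA.det_pos.ne'
  set yd : Fin p → ℝ := A⁻¹ *ᵥ (lam • (Qreg *ᵥ s) + Q *ᵥ yref) with hyd
  have hA_mul : A *ᵥ yd = lam • (Qreg *ᵥ s) + Q *ᵥ yref := by
    rw [hyd, mulVec_mulVec, Matrix.mul_nonsing_inv A hdet, one_mulVec]
  set w : Fin p → ℝ := y - yd with hw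
  -- cross term vanishes
  have hcross : w ⬝ᵥ (Q *ᵥ (yd - yref)) + lam * (w ⬝ᵥ (Qreg *ᵥ (yd - s))) = 0 := by
    have h := congrArg (fun v => w ⬝ᵥ v) hA_mul
    simp only [hAdef, add_mulVec, smul_mulVec, dotProduct_add, dotProduct_smul,
      smul_eq_mul] at h
    simp only [mulVec_sub, dotProduct_sub]
    linear_combination h
  -- key identity
  have key : (y - yref) ⬝ᵥ (Q *ᵥ (y - yref)) + lam * ((y - s) ⬝ᵥ (Qreg *ᵥ (y - s)))
      = ((yd - yref) ⬝ᵥ (Q *ᵥ (yd - yref)) + lam * ((yd - s) ⬝ᵥ (Qreg *ᵥ (yd - s))))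
        + w ⬝ᵥ (A *ᵥ w) := by
    have e1 : y - yref = (yd - yref) + w := by rw [hw]; ring
    have e2 : y - s = (yd - s) + w := by rw [hw]; ring
    have hs1 : (yd - yref) ⬝ᵥ (Q *ᵥ w) = w ⬝ᵥ (Q *ᵥ (yd - yref)) := dot_symm Q hQs _ _
    have hs2 : (yd - s) ⬝ᵥ (Qreg *ᵥ w) = w ⬝ᵥ (Qreg *ᵥ (yd - s)) := dot_symm Qreg hQregs _ _
    rw [e1, e2]
    simp only [hAdef, mulVec_add, dotProduct_add, add_dotProduct, add_mulVec,
      smul_mulVec, dotProduct_smul, smul_eq_mul]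
    linear_combination hs1 + lam * hs2 + 2 * hcross
  constructor
  · have hnn : 0 ≤ w ⬝ᵥ (A *ᵥ w) := by
      have := hA.posSemidef.dotProduct_mulVec_nonneg w
      simpa using this
    linarith [key]
  · intro hle
    by_contra hne
    have hwne : w ≠ 0 := sub_ne_zero.mpr hne
    have hpos : 0 < w ⬝ᵥ (A *ᵥ w) := by
      have := hA.dotProduct_mulVec_pos hwne
      simpa using this
    linarith [key]
/-- Enforcing the implicit predictor `y = ŷ_DPC(u)` as an explicit constraint
does not alter minimizers or optimal value of the regularized DPC problem,
for arbitrary input constraints `U` and arbitrary input cost `g`. -/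
theorem stmt_12 (p m : ℕ) (Q Qreg : Matrix (Fin p) (Fin p) ℝ)
    (hQs : Q.IsSymm) (hQregs : Qreg.IsSymm)
    (hQ : Q.PosSemidef) (hQreg : Qreg.PosDef)
    (lam : ℝ) (hlam : 0 < lam) (g : (Fin m → ℝ) → ℝ)
    (yspc : (Fin m → ℝ) → (Fin p → ℝ))
    (haff : ∃ (B : Matrix (Fin p) (Fin m) ℝ) (c : Fin p → ℝ),
        ∀ u, yspc u = B *ᵥ u + c)
    (yref : Fin p → ℝ) :
    let f : (Fin m → ℝ) → (Fin p → ℝ) → ℝ :=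
      fun u y => (y - yref) ⬝ᵥ (Q *ᵥ (y - yref)) + g u
        + lam * ((y - yspc u) ⬝ᵥ (Qreg *ᵥ (y - yspc u)))
    let ydpc : (Fin m → ℝ) → (Fin p → ℝ) :=
      fun u => (lam • Qreg + Q)⁻¹ *ᵥ (lam • (Qreg *ᵥ yspc u) + Q *ᵥ yref)
    ∀ U : Set (Fin m → ℝ),
      (∀ (ustar : Fin m → ℝ) (ystar : Fin p → ℝ),
        (ustar ∈ U ∧ ∀ u ∈ U, ∀ y : Fin p → ℝ, f ustar ystar ≤ f u y)
          ↔ (ustar ∈ U ∧ (∀ u ∈ U, f ustar (ydpc ustar) ≤ f u (ydpc u)) ∧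
              ystar = ydpc ustar)) ∧
      sInf {v : ℝ | ∃ u ∈ U, ∃ y : Fin p → ℝ, v = f u y}
        = sInf {v : ℝ | ∃ u ∈ U, v = f u (ydpc u)} := by
  intro f ydpc U
  have hf : ∀ u y, f u y = (y - yref) ⬝ᵥ (Q *ᵥ (y - yref)) + g u
      + lam * ((y - yspc u) ⬝ᵥ (Qreg *ᵥ (y - yspc u))) := fun u y => rfl
  have hyd : ∀ u, ydpc u
      = (lam • Qreg + Q)⁻¹ *ᵥ (lam • (Qreg *ᵥ yspc u) + Q *ᵥ yref) := fun u => rfl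
  have fmin : ∀ u y, f u (ydpc u) ≤ f u y := by
    intro u y
    have h := (aux_quad_s12 p Q Qreg hQs hQregs hQ hQreg lam hlam (yspc u) yref y).1
    rw [hf, hf, hyd]
    linarith
  have feq : ∀ u y, f u y ≤ f u (ydpc u) → y = ydpc u := by
    intro u y hle
    have h := (aux_quad_s12 p Q Qreg hQs hQregs hQ hQreg lam hlam (yspc u) yref y).2
    rw [hyd]
    apply h
    rw [hf, hf, hyd] at hle
    linarith
  refine ⟨?_, ?_⟩
  · intro ustar ystar
    constructor
    · rintro ⟨hu, hmin⟩
      have h1 : f ustar ystar ≤ f ustar (ydpc ustar) := hmin ustar hu _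
      have hy : ystar = ydpc ustar := feq ustar ystar h1
      refine ⟨hu, ?_, hy⟩
      intro u hu'
      calc f ustar (ydpc ustar) = f ustar ystar := by rw [hy]
        _ ≤ f u (ydpc u) := hmin u hu' _
    · rintro ⟨hu, hmin, rfl⟩
      exact ⟨hu, fun u hu' y => (hmin u hu').trans (fmin u y)⟩
  · set S1 := {v : ℝ | ∃ u ∈ U, ∃ y : Fin p → ℝ, v = f u y} with hS1
    set S2 := {v : ℝ | ∃ u ∈ U, v = f u (ydpc u)} with hS2
    have hsub : S2 ⊆ S1 := by rintro v ⟨u, hu, rfl⟩; exact ⟨u, hu, ydpc u, rfl⟩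
    have hdom : ∀ v ∈ S1, ∃ w ∈ S2, w ≤ v := by
      rintro v ⟨u, hu, y, rfl⟩
      exact ⟨f u (ydpc u), ⟨u, hu, rfl⟩, fmin u y⟩
    rcases Set.eq_empty_or_nonempty U with hU | hU
    · have e1 : S1 = ∅ := by ext v; simp [hS1, hU]
      have e2 : S2 = ∅ := by ext v; simp [hS2, hU]
      rw [e1, e2]
    · obtain ⟨u0, hu0⟩ := hU
      have hS2ne : S2.Nonempty := ⟨f u0 (ydpc u0), u0, hu0, rfl⟩
      have hS1ne : S1.Nonempty := hS2ne.mono hsub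
      by_cases hbdd : BddBelow S2
      · have hbdd1 : BddBelow S1 := by
          obtain ⟨c, hc⟩ := hbdd
          refine ⟨c, fun v hv => ?_⟩
          obtain ⟨w, hw, hwv⟩ := hdom v hv
          exact (hc hw).trans hwv
        refine le_antisymm (csInf_le_csInf hbdd1 hS2ne hsub) ?_
        apply le_csInf hS1ne
        intro v hv
        obtain ⟨w, hw, hwv⟩ := hdom v hv
        exact (csInf_le hbdd hw).trans hwv
      · have hbdd1 : ¬ BddBelow S1 := fun h => hbdd (h.mono hsub)
        rw [Real.sInf_of_not_bddBelow hbdd, Real.sInf_of_not_bddBelow hbdd1]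
end

section
/- Let Q_reg ≻ 0, Q ⪰ 0 be symmetric p×p matrices, λ > 0, and set M := (λQ_reg + Q)⁻¹λQ_reg and N := (λQ_reg + Q)⁻¹Q. Then M + N = I, and the implicit predictor ŷ_DPC = M ŷ_SPC + N y_ref satisfies: ŷ_DPC → ŷ_SPC as λ → ∞ (for fixed ŷ_SPC, y_ref), i.e., lim_{λ→∞} (λQ_reg + Q)⁻¹λQ_reg = I. -/
open Matrix Filter

private lemma smul_posdef' {p : ℕ} {Qreg : Matrix (Fin p) (Fin p) ℝ} (h : Qreg.PosDef)
    {lam : ℝ} (hl : 0 < lam) : (lam • Qreg).PosDef := by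
  refine ⟨?_, fun x hx => ?_⟩
  · unfold Matrix.IsHermitian
    rw [conjTranspose_smul, h.isHermitian.eq, star_trivial]
  · rw [show (x.sum fun i xi ↦ x.sum fun j xj ↦ star xi * (lam • Qreg) i j * xj) =
        lam * (x.sum fun i xi ↦ x.sum fun j xj ↦ star xi * Qreg i j * xj) by
      simp only [Finsupp.sum, Finset.mul_sum, Matrix.smul_apply, smul_eq_mul]
      exact Finset.sum_congr rfl fun i _ => Finset.sum_congr rfl fun j _ => by ring]
    exact mul_pos hl (by simpa using h.2 hx)

private lemma smul_possemidef' {p : ℕ} {Q : Matrix (Fin p) (Fin p) ℝ} (h : Q.PosSemidef)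
    {lam : ℝ} (hl : 0 ≤ lam) : (lam • Q).PosSemidef := by
  refine ⟨?_, fun x => ?_⟩
  · unfold Matrix.IsHermitian
    rw [conjTranspose_smul, h.isHermitian.eq, star_trivial]
  · rw [show (x.sum fun i xi ↦ x.sum fun j xj ↦ star xi * (lam • Q) i j * xj) =
        lam * (x.sum fun i xi ↦ x.sum fun j xj ↦ star xi * Q i j * xj) by
      simp only [Finsupp.sum, Finset.mul_sum, Matrix.smul_apply, smul_eq_mul]
      exact Finset.sum_congr rfl fun i _ => Finset.sum_congr rfl fun j _ => by ring]
    exact mul_nonneg hl (by simpa using h.2 x)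

private lemma inv_cont' {p : ℕ} {Q Qreg : Matrix (Fin p) (Fin p) ℝ}
    (hQreg : Qreg.PosDef) :
    Tendsto (fun t : ℝ => (Qreg + t • Q)⁻¹ * Qreg) (nhds 0) (nhds 1) := by
  have h1 : ContinuousAt (fun M : Matrix (Fin p) (Fin p) ℝ => M⁻¹) Qreg := by
    apply continuousAt_matrix_inv
    rw [Ring.inverse_eq_inv']
    exact continuousAt_inv₀ hQreg.det_pos.ne'
  have h2 : Tendsto (fun t : ℝ => Qreg + t • Q) (nhds 0) (nhds Qreg) := by
    have : Continuous (fun t : ℝ => Qreg + t • Q) := by fun_prop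
    simpa using this.tendsto 0
  have h4 := ((h1.tendsto).comp h2).mul (tendsto_const_nhds (x := Qreg))
  simpa [Matrix.nonsing_inv_mul Qreg hQreg.det_pos.ne'.isUnit] using h4

/-- The DPC implicit predictor is a matrix-weighted average of the SPC
prediction and the reference: `M + N = I` for every `λ > 0`, and
`(λQ_reg + Q)⁻¹ λQ_reg → I` as `λ → ∞`, so that `ŷ_DPC → ŷ_SPC`. -/
theorem stmt_13 (p : ℕ) (Q Qreg : Matrix (Fin p) (Fin p) ℝ)
    (hQs : Q.IsSymm) (hQregs : Qreg.IsSymm)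
    (hQ : Q.PosSemidef) (hQreg : Qreg.PosDef) :
    (∀ lam : ℝ, 0 < lam →
      (lam • Qreg + Q)⁻¹ * (lam • Qreg) + (lam • Qreg + Q)⁻¹ * Q = 1) ∧
    Tendsto (fun lam : ℝ => (lam • Qreg + Q)⁻¹ * (lam • Qreg)) atTop
      (nhds (1 : Matrix (Fin p) (Fin p) ℝ)) ∧
    (∀ yspc yref : Fin p → ℝ,
      Tendsto (fun lam : ℝ =>
          (lam • Qreg + Q)⁻¹ *ᵥ (lam • (Qreg *ᵥ yspc) + Q *ᵥ yref)) atTop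
        (nhds yspc)) := by
  have hApd : ∀ lam : ℝ, 0 < lam → (lam • Qreg + Q).PosDef := fun lam hl =>
    (smul_posdef' hQreg hl).add_posSemidef hQ
  have part1 : ∀ lam : ℝ, 0 < lam →
      (lam • Qreg + Q)⁻¹ * (lam • Qreg) + (lam • Qreg + Q)⁻¹ * Q = 1 := by
    intro lam hl
    rw [← mul_add, Matrix.nonsing_inv_mul _ (hApd lam hl).det_pos.ne'.isUnit]
  -- key eventual equality
  have hEq : ∀ lam : ℝ, 0 < lam →
      (lam • Qreg + Q)⁻¹ * (lam • Qreg) = (Qreg + lam⁻¹ • Q)⁻¹ * Qreg := by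
    intro lam hl
    have hB : (Qreg + lam⁻¹ • Q).PosDef :=
      hQreg.add_posSemidef (smul_possemidef' hQ (by positivity))
    have hsplit : lam • Qreg + Q = lam • (Qreg + lam⁻¹ • Q) := by
      rw [smul_add, smul_smul, mul_inv_cancel₀ hl.ne', one_smul]
    letI : Invertible lam := invertibleOfNonzero hl.ne'
    rw [hsplit, Matrix.inv_smul _ lam hB.det_pos.ne'.isUnit]
    rw [smul_mul_assoc, Matrix.mul_smul, smul_smul]
    rw [invOf_eq_inv]; norm_num [inv_mul_cancel₀ hl.ne']
  have hevEq : (fun lam : ℝ => (lam • Qreg + Q)⁻¹ * (lam • Qreg)) =ᶠ[atTop]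
      (fun lam : ℝ => (Qreg + lam⁻¹ • Q)⁻¹ * Qreg) := by
    filter_upwards [eventually_gt_atTop 0] with lam hl using hEq lam hl
  have part2 : Tendsto (fun lam : ℝ => (lam • Qreg + Q)⁻¹ * (lam • Qreg)) atTop
      (nhds (1 : Matrix (Fin p) (Fin p) ℝ)) := by
    refine Tendsto.congr' hevEq.symm ?_
    exact (inv_cont' (Q := Q) hQreg).comp tendsto_inv_atTop_zero
  refine ⟨part1, part2, ?_⟩
  intro yspc yref
  set M : ℝ → Matrix (Fin p) (Fin p) ℝ :=
    fun lam => (lam • Qreg + Q)⁻¹ * (lam • Qreg) with hM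
  have hev : (fun lam : ℝ =>
      (lam • Qreg + Q)⁻¹ *ᵥ (lam • (Qreg *ᵥ yspc) + Q *ᵥ yref)) =ᶠ[atTop]
      (fun lam : ℝ => M lam *ᵥ yspc + (1 - M lam) *ᵥ yref) := by
    filter_upwards [eventually_gt_atTop 0] with lam hl
    have h2 : (lam • Qreg + Q)⁻¹ * Q = 1 - M lam := by
      rw [eq_sub_iff_add_eq, add_comm]; exact part1 lam hl
    rw [Matrix.mulVec_add, ← smul_mulVec, Matrix.mulVec_mulVec,
      Matrix.mulVec_mulVec, h2]
  refine Tendsto.congr' hev.symm ?_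
  have hG : Continuous (fun X : Matrix (Fin p) (Fin p) ℝ =>
      X *ᵥ yspc + (1 - X) *ᵥ yref) := by
    exact ((continuous_id.matrix_mulVec continuous_const).add
      ((continuous_const.sub continuous_id).matrix_mulVec continuous_const))
  have := (hG.tendsto 1).comp part2
  simpa [Function.comp_def] using this
end
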